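/- Let V be a vector space and W ⊆ V a subspace of dimension r. Let R be a commutative ring and g ∈ Aut_R(V ⊗ R) an automorphism such that Λ^r(W ⊗ R) is mapped into itself by Λ^r(g) inside Λ^r(V ⊗ R). Then g maps W ⊗ R into itself. -/

import Mathlib

open TensorProduct ExteriorAlgebra Module

section Aux

variable {R M N : Type*} [CommRing R] [AddCommGroup M] [Module R M]
  [AddCommGroup N] [Module R N]

private lemma alt_eq_det_smul {n : ℕ} (b : Basis (Fin n) R M)
    (f : M [⋀^Fin n]→ₗ[R] N) (v : Fin n → M) : f v = b.det v • f b := by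
  have h : f = (LinearMap.toSpanSingleton R N (f b)).compAlternatingMap b.det := by
    refine Basis.ext_alternating b fun u hu => ?_
    let σ : Equiv.Perm (Fin n) := Equiv.ofBijective u (Finite.injective_iff_bijective.1 hu)
    have h1 : (fun i => b (u i)) = b ∘ σ := rfl
    rw [h1, AlternatingMap.map_perm, LinearMap.compAlternatingMap_apply,
      AlternatingMap.map_perm, Basis.det_self]
    simp [LinearMap.toSpanSingleton_apply]
  conv_lhs => rw [h]
  simp [LinearMap.toSpanSingleton_apply]

private noncomputable def coordAlt {ι : Type*} [DecidableEq ι] (b : Basis ι R M) {n : ℕ}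
    (σ : Fin n → ι) : M [⋀^Fin n]→ₗ[R] R :=
  Matrix.detRowAlternating.compLinearMap (LinearMap.pi fun i => b.coord (σ i))

private lemma coordAlt_apply {ι : Type*} [DecidableEq ι] (b : Basis ι R M) {n : ℕ}
    (σ : Fin n → ι) (v : Fin n → M) :
    coordAlt b σ v = Matrix.det (Matrix.of fun j i => b.repr (v j) (σ i)) := rfl

private lemma coordAlt_self {ι : Type*} [DecidableEq ι] (b : Basis ι R M) {n : ℕ}
    {σ : Fin n → ι} (hσ : Function.Injective σ) :
    coordAlt b σ (fun j => b (σ j)) = 1 := by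
  rw [coordAlt_apply]
  have h : (Matrix.of fun j i => (b.repr (b (σ j))) (σ i)) = (1 : Matrix (Fin n) (Fin n) R) := by
    ext j i
    simp only [Matrix.of_apply, Basis.repr_self, Finsupp.single_apply, Matrix.one_apply,
      hσ.eq_iff]
  rw [h, Matrix.det_one]

private lemma coordAlt_zero {ι : Type*} [DecidableEq ι] (b : Basis ι R M) {n : ℕ}
    (σ : Fin n → ι) (v : Fin n → M) (i₀ : Fin n) (h : ∀ j, b.repr (v j) (σ i₀) = 0) :
    coordAlt b σ v = 0 := by
  rw [coordAlt_apply]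
  exact Matrix.det_eq_zero_of_column_eq_zero i₀ (fun j => h j)

private noncomputable def extCoord {ι : Type*} [DecidableEq ι] (b : Basis ι R M) {n : ℕ}
    (σ : Fin n → ι) : ExteriorAlgebra R M →ₗ[R] R :=
  liftAlternating (Function.update (fun i => (0 : M [⋀^Fin i]→ₗ[R] R)) n (coordAlt b σ))

private lemma extCoord_ιMulti {ι : Type*} [DecidableEq ι] (b : Basis ι R M) {n : ℕ}
    (σ : Fin n → ι) (v : Fin n → M) :
    extCoord b σ (ιMulti R n v) = coordAlt b σ v := by
  rw [extCoord, liftAlternating_apply_ιMulti, Function.update_self]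

private lemma exists_adapted_basis {k V : Type*} [Field k] [AddCommGroup V] [Module k V]
    [FiniteDimensional k V] {r : ℕ} (W : Submodule k V) (hW : Module.finrank k W = r) :
    ∃ (s : ℕ) (bV : Basis (Fin r ⊕ Fin s) k V),
      W = Submodule.span k (Set.range fun i => bV (Sum.inl i)) := by
  obtain ⟨W', hc⟩ := Submodule.exists_isCompl W
  refine ⟨Module.finrank k W', ?_, ?_⟩
  · exact ((Module.finBasisOfFinrankEq k W hW).prod (Module.finBasis k W')).map
      (Submodule.prodEquivOfIsCompl W W' hc)
  · set bW := Module.finBasisOfFinrankEq k W hW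
    have hb : ∀ i, (((bW.prod (Module.finBasis k W')).map
        (Submodule.prodEquivOfIsCompl W W' hc)) (Sum.inl i)) = (bW i : V) := by
      intro i
      rw [Basis.map_apply, Submodule.coe_prodEquivOfIsCompl']
      rw [Basis.prod_apply_inl_fst, Basis.prod_apply_inl_snd]
      simp
    have h1 : (fun i => ((bW.prod (Module.finBasis k W')).map
        (Submodule.prodEquivOfIsCompl W W' hc)) (Sum.inl i)) = W.subtype ∘ bW :=
      funext fun i => hb i
    rw [h1, Set.range_comp, ← Submodule.map_span, bW.span_eq, Submodule.map_top,
      Submodule.range_subtype]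

end Aux

set_option maxHeartbeats 1000000 in
set_option synthInstance.maxHeartbeats 400000 in
theorem stmt_10 (k : Type*) [Field k] (V : Type*) [AddCommGroup V] [Module k V]
    [FiniteDimensional k V] (r : ℕ) (W : Submodule k V) (hW : Module.finrank k W = r)
    (R : Type*) [CommRing R] [Algebra k R]
    (g : (R ⊗[k] V) ≃ₗ[R] (R ⊗[k] V))
    (E : Submodule R (ExteriorAlgebra R (R ⊗[k] V)))
    (hE : E = Submodule.map (ExteriorAlgebra.map (W.baseChange R).subtype).toLinearMap
      (⋀[R]^r (W.baseChange R) : Submodule R (ExteriorAlgebra R (W.baseChange R))))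
    (hstab : Submodule.map (ExteriorAlgebra.map (g : R ⊗[k] V →ₗ[R] R ⊗[k] V)).toLinearMap
      E ≤ E) :
    Submodule.map (g : R ⊗[k] V →ₗ[R] R ⊗[k] V) (W.baseChange R) ≤ W.baseChange R := by
  classical
  obtain ⟨s, bV, hWspan⟩ := exists_adapted_basis W hW
  set b : Basis (Fin r ⊕ Fin s) R (R ⊗[k] V) := bV.baseChange R with hbdef
  set e : Fin r → R ⊗[k] V := fun i => b (Sum.inl i) with hedef
  set ω : ExteriorAlgebra R (R ⊗[k] V) := ιMulti R r e with hωdef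
  -- the base-changed submodule is the span of the first part of the basis
  have hWR : W.baseChange R = Submodule.span R (Set.range e) := by
    have him : (TensorProduct.mk k R V 1) '' (Set.range fun i => bV (Sum.inl i))
        = Set.range e := by
      rw [← Set.range_comp]
      refine congrArg Set.range (funext fun i => ?_)
      simp [hedef, hbdef, Basis.baseChange_apply]
    rw [hWspan, Submodule.baseChange_span, him]
  -- a basis of the base-changed submodule
  have li : LinearIndependent R e := b.linearIndependent.comp _ Sum.inl_injective
  set bWR : Basis (Fin r) R (W.baseChange R) :=
    (Basis.span li).map (LinearEquiv.ofEq _ _ hWR.symm) with hbWRdef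
  have hbWR : ∀ i, ((bWR i : R ⊗[k] V)) = e i := by
    intro i
    rw [hbWRdef, Basis.map_apply]
    have := Basis.span_apply li i
    simpa [LinearEquiv.coe_ofEq_apply] using this
  -- E is spanned by ω
  have hsub : ∀ v : Fin r → (W.baseChange R),
      (ExteriorAlgebra.map (W.baseChange R).subtype).toLinearMap (ιMulti R r v)
        = ((ιMulti R r (M := R ⊗[k] V)).compLinearMap (W.baseChange R).subtype) v := by
    intro v
    rw [AlgHom.toLinearMap_apply, map_apply_ιMulti]
    rfl
  have hFb : ((ιMulti R r (M := R ⊗[k] V)).compLinearMap (W.baseChange R).subtype) bWR = ω := by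
    rw [AlternatingMap.compLinearMap_apply, hωdef]
    exact congrArg _ (funext fun i => hbWR i)
  have hE' : E = Submodule.span R {ω} := by
    apply le_antisymm
    · rw [hE, ← ιMulti_span_fixedDegree, Submodule.map_span, Submodule.span_le]
      rintro x ⟨y, ⟨v, rfl⟩, rfl⟩
      rw [hsub v, alt_eq_det_smul bWR _ v, hFb]
      exact Submodule.smul_mem _ _ (Submodule.mem_span_singleton_self ω)
    · rw [Submodule.span_le, Set.singleton_subset_iff, hE]
      refine ⟨ιMulti R r bWR, ιMulti_range R r ⟨bWR, rfl⟩, ?_⟩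
      rw [hsub bWR, hFb]
  -- the image of ω under Λ g is a multiple of ω
  have hωE : ω ∈ E := by
    rw [hE']
    exact Submodule.mem_span_singleton_self ω
  have hgω : (ExteriorAlgebra.map (g : R ⊗[k] V →ₗ[R] R ⊗[k] V)) ω ∈ E :=
    hstab ⟨ω, hωE, rfl⟩
  rw [hE', Submodule.mem_span_singleton] at hgω
  obtain ⟨a, ha⟩ := hgω
  -- a is a unit
  have hl0 : extCoord b (fun i : Fin r => (Sum.inl i : Fin r ⊕ Fin s)) ω = 1 := by
    rw [hωdef, extCoord_ιMulti]
    exact coordAlt_self b (fun i j h => Sum.inl_injective h)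
  have hinv : ω = a • ExteriorAlgebra.map ((g.symm : R ⊗[k] V →ₗ[R] R ⊗[k] V)) ω := by
    have h1 : ExteriorAlgebra.map ((g.symm : R ⊗[k] V →ₗ[R] R ⊗[k] V))
        ((ExteriorAlgebra.map (g : R ⊗[k] V →ₗ[R] R ⊗[k] V)) ω) = ω := by
      rw [hωdef, map_apply_ιMulti, map_apply_ιMulti]
      congr 1
      funext i
      simp
    calc ω = ExteriorAlgebra.map ((g.symm : R ⊗[k] V →ₗ[R] R ⊗[k] V))
          ((ExteriorAlgebra.map (g : R ⊗[k] V →ₗ[R] R ⊗[k] V)) ω) := h1.symm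
      _ = ExteriorAlgebra.map ((g.symm : R ⊗[k] V →ₗ[R] R ⊗[k] V)) (a • ω) := by rw [← ha]
      _ = a • ExteriorAlgebra.map ((g.symm : R ⊗[k] V →ₗ[R] R ⊗[k] V)) ω :=
        map_smul (ExteriorAlgebra.map _).toLinearMap a ω
  have hunit : IsUnit a := by
    have h2 := congrArg (extCoord b (fun i : Fin r => (Sum.inl i : Fin r ⊕ Fin s))) hinv
    rw [map_smul, smul_eq_mul, hl0] at h2
    exact IsUnit.of_mul_eq_one (b := _) h2.symm
  -- wedging with ω kills the base-changed submodule
  have hcons : ∀ x : R ⊗[k] V,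
      ExteriorAlgebra.ι R x * ω = ιMulti R (r+1) (Fin.cons x e) := by
    intro x
    have hvt : Matrix.vecTail (Fin.cons x e) = e := by
      funext i; simp [Matrix.vecTail]
    rw [ιMulti_succ_apply, Fin.cons_zero, hvt, hωdef]
  have hLzero : ∀ x ∈ W.baseChange R, ExteriorAlgebra.ι R x * ω = 0 := by
    intro x hx
    have hker : W.baseChange R ≤
        LinearMap.ker ((LinearMap.mulRight R ω).comp (ExteriorAlgebra.ι R)) := by
      rw [hWR, Submodule.span_le]
      rintro _ ⟨i, rfl⟩
      simp only [SetLike.mem_coe, LinearMap.mem_ker, LinearMap.comp_apply,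
        LinearMap.mulRight_apply]
      rw [hcons (e i)]
      refine AlternatingMap.map_eq_zero_of_eq _ _ (i := 0) (j := i.succ) ?_ ?_
      · rw [Fin.cons_zero, Fin.cons_succ]
      · exact (Fin.succ_ne_zero i).symm
    simpa using hker hx
  -- main argument
  rintro _ ⟨x, hx, rfl⟩
  set y := (g : R ⊗[k] V →ₗ[R] R ⊗[k] V) x with hydef
  have hy : ExteriorAlgebra.ι R y * ω = 0 := by
    have h1 : ExteriorAlgebra.map (g : R ⊗[k] V →ₗ[R] R ⊗[k] V)
        (ExteriorAlgebra.ι R x * ω) = 0 := by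
      rw [hLzero x hx, map_zero]
    rw [map_mul, ExteriorAlgebra.map_apply_ι, ← ha, mul_smul_comm] at h1
    exact (hunit.smul_eq_zero).mp h1
  have hsum : ExteriorAlgebra.ι R y * ω
      = ∑ m, (b.repr y) m • (ExteriorAlgebra.ι R (b m) * ω) := by
    conv_lhs => rw [← b.sum_repr y]
    rw [map_sum, Finset.sum_mul]
    refine Finset.sum_congr rfl fun m _ => ?_
    rw [map_smul, smul_mul_assoc]
  have hcoef : ∀ j : Fin s, b.repr y (Sum.inr j) = 0 := by
    intro j
    set σ : Fin (r+1) → (Fin r ⊕ Fin s) :=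
      Fin.cons (Sum.inr j) (fun i : Fin r => Sum.inl i) with hσdef
    have hσinj : Function.Injective σ := by
      intro p q h
      rcases Fin.eq_zero_or_eq_succ p with hp | ⟨p', hp⟩ <;>
        rcases Fin.eq_zero_or_eq_succ q with hq | ⟨q', hq⟩ <;> subst hp <;> subst hq
      · rfl
      · simp [hσdef, Fin.cons_zero, Fin.cons_succ] at h
      · simp [hσdef, Fin.cons_zero, Fin.cons_succ] at h
      · simp only [hσdef, Fin.cons_succ] at h
        rw [Sum.inl.injEq] at h
        rw [h]
    have hσ0 : σ 0 = Sum.inr j := by rw [hσdef, Fin.cons_zero]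
    have happ : ∀ m : Fin r ⊕ Fin s,
        extCoord b σ (ExteriorAlgebra.ι R (b m) * ω) = if m = Sum.inr j then 1 else 0 := by
      intro m
      rw [hcons (b m), extCoord_ιMulti]
      by_cases hm : m = Sum.inr j
      · subst hm
        rw [if_pos rfl]
        have hv : Fin.cons (b (Sum.inr j)) e = fun p => b (σ p) := by
          funext p
          rcases Fin.eq_zero_or_eq_succ p with hp | ⟨p', hp⟩ <;> subst hp <;>
            simp [hσdef, hedef, Fin.cons_zero, Fin.cons_succ]
        rw [hv]
        exact coordAlt_self b hσinj
      · rw [if_neg hm]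
        refine coordAlt_zero b σ _ 0 ?_
        intro p
        rcases Fin.eq_zero_or_eq_succ p with hp | ⟨p', hp⟩ <;> subst hp
        · rw [Fin.cons_zero, hσ0, Basis.repr_self, Finsupp.single_apply, if_neg hm]
        · rw [Fin.cons_succ, hσ0]
          simp [hedef, Basis.repr_self, Finsupp.single_apply]
    have h0 := congrArg (extCoord b σ) hy
    rw [hsum, map_sum, map_zero] at h0
    have h1 : ∀ m : Fin r ⊕ Fin s,
        extCoord b σ ((b.repr y) m • (ExteriorAlgebra.ι R (b m) * ω))
          = if m = Sum.inr j then b.repr y (Sum.inr j) else 0 := by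
      intro m
      rw [map_smul, happ m, smul_eq_mul]
      by_cases hm : m = Sum.inr j
      · subst hm; simp
      · simp [hm]
    rw [Finset.sum_congr rfl (fun m _ => h1 m),
      Finset.sum_ite_eq' Finset.univ (Sum.inr j)] at h0
    simpa using h0
  -- conclude
  have hfin : y = ∑ i : Fin r, b.repr y (Sum.inl i) • e i := by
    conv_lhs => rw [← b.sum_repr y]
    rw [Fintype.sum_sum_type]
    simp [hcoef, hedef]
  rw [hWR, hfin]
  exact Submodule.sum_mem _ fun i _ =>
    Submodule.smul_mem _ _ (Submodule.subset_span ⟨i, rfl⟩)
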